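/- Consider the model (ℝ, 𝒞, {N(θ,1)}_{θ∈ℝ}) where 𝒞 is the σ-algebra of Borel sets symmetric about c ∈ ℝ. Set θ₁ = c − λ₁, θ₂ = c + λ₁ with λ₁ ≥ 0. Then the experts for the choice between Θ₁ = (-∞,θ₁) ∪ (θ₂,∞) and Θ₀ = [θ₁,θ₂] are exactly the 𝒞-measurable rules a.s. of the form g_t(x) = 1_{[t,∞)}(|x − c|), t ∈ [0,∞]. -/

import Mathlib

open MeasureTheory Set ProbabilityTheory Real
open scoped ENNReal NNReal symmDiff



-- cosh product inequality
lemma cosh_mul_cosh_le {a b s r : ℝ} (ha : 0 ≤ a) (hab : a ≤ b) (hs : 0 ≤ s) (hsr : s ≤ r) :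
    cosh (a*r) * cosh (b*s) ≤ cosh (b*r) * cosh (a*s) := by
  have h1 : cosh (a*r) * cosh (b*s) = (cosh (a*r + b*s) + cosh (a*r - b*s)) / 2 := by
    rw [Real.cosh_add, Real.cosh_sub]; ring
  have h2 : cosh (b*r) * cosh (a*s) = (cosh (b*r + a*s) + cosh (b*r - a*s)) / 2 := by
    rw [Real.cosh_add, Real.cosh_sub]; ring
  rw [h1, h2]
  have e1 : cosh (a*r + b*s) ≤ cosh (b*r + a*s) := by
    rw [Real.cosh_le_cosh]
    have hr : 0 ≤ r := hs.trans hsr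
    rw [abs_of_nonneg (by nlinarith), abs_of_nonneg (by nlinarith)]
    nlinarith
  have e2 : cosh (a*r - b*s) ≤ cosh (b*r - a*s) := by
    rw [Real.cosh_le_cosh]
    have hr : 0 ≤ r := hs.trans hsr
    have hbs : 0 ≤ b*r - a*s := by nlinarith
    rw [abs_of_nonneg hbs]
    rw [abs_le]
    constructor <;> nlinarith
  linarith

lemma cosh_key {d₀ d u w : ℝ} (h : |d₀| ≤ |d|) (h2 : |w| ≤ |u|) :
    cosh (d₀*u) * cosh (d*w) ≤ cosh (d*u) * cosh (d₀*w) := by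
  have e : ∀ p q : ℝ, cosh (p*q) = cosh (|p| * |q|) := fun p q => by
    rw [← abs_mul, Real.cosh_abs]
  rw [e d₀ u, e d w, e d u, e d₀ w]
  exact cosh_mul_cosh_le (abs_nonneg _) h (abs_nonneg _) h2


noncomputable def Msym (θ c x : ℝ) : ℝ :=
  gaussianPDFReal θ 1 x + gaussianPDFReal θ 1 (2*c - x)

lemma Msym_eq (θ c x : ℝ) :
    Msym θ c x = (2 * (Real.sqrt (2*π))⁻¹ * Real.exp (-(x-c)^2/2)) *
      (Real.exp (-(θ-c)^2/2) * Real.cosh ((θ-c)*(x-c))) := by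
  unfold Msym gaussianPDFReal
  push_cast
  rw [Real.cosh_eq]
  rw [show (2:ℝ)*(1:ℝ)=2 by norm_num]
  rw [show -(x - θ)^2/(2:ℝ) = -(x-c)^2/2 + -(θ-c)^2/2 + (θ-c)*(x-c) by ring,
      show -(2*c - x - θ)^2/(2:ℝ) = -(x-c)^2/2 + -(θ-c)^2/2 + -((θ-c)*(x-c)) by ring]
  rw [Real.exp_add, Real.exp_add, Real.exp_add, Real.exp_add]
  ring

lemma Msym_nonneg (θ c x : ℝ) : 0 ≤ Msym θ c x :=
  add_nonneg (gaussianPDFReal_nonneg _ _ _) (gaussianPDFReal_nonneg _ _ _)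

lemma Msym_mul_le {θ₀ θ c x y : ℝ} (h : |θ₀ - c| ≤ |θ - c|) (h2 : |y - c| ≤ |x - c|) :
    Msym θ₀ c x * Msym θ c y ≤ Msym θ c x * Msym θ₀ c y := by
  have key : cosh ((θ₀-c)*(x-c)) * cosh ((θ-c)*(y-c)) ≤
      cosh ((θ-c)*(x-c)) * cosh ((θ₀-c)*(y-c)) := cosh_key h h2
  rw [Msym_eq, Msym_eq, Msym_eq, Msym_eq]
  have hx : 0 ≤ 2 * (Real.sqrt (2*π))⁻¹ * Real.exp (-(x-c)^2/2) := by positivity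
  have hy : 0 ≤ 2 * (Real.sqrt (2*π))⁻¹ * Real.exp (-(y-c)^2/2) := by positivity
  have he0 : 0 ≤ Real.exp (-(θ₀-c)^2/2) := (Real.exp_pos _).le
  have he : 0 ≤ Real.exp (-(θ-c)^2/2) := (Real.exp_pos _).le
  nlinarith [mul_le_mul_of_nonneg_left key (mul_nonneg (mul_nonneg (mul_nonneg hx hy) he0) he)]


lemma measurable_Msym (θ c : ℝ) : Measurable (Msym θ c) :=
  (measurable_gaussianPDFReal θ 1).add
    ((measurable_gaussianPDFReal θ 1).comp (measurable_const.sub measurable_id))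

lemma reflect_lintegral (c : ℝ) (f : ℝ → ℝ≥0∞) (hf : Measurable f) :
    ∫⁻ x, f (2*c - x) = ∫⁻ x, f x :=
  (MeasureTheory.Measure.measurePreserving_sub_left volume (2*c)).lintegral_comp hf

lemma symm_setLIntegral {c : ℝ} {S : Set ℝ} (hS : MeasurableSet S)
    (hSsym : ∀ x, 2*c - x ∈ S ↔ x ∈ S) (f : ℝ → ℝ≥0∞) (hf : Measurable f) :
    ∫⁻ x in S, f (2*c - x) = ∫⁻ x in S, f x := by
  rw [← lintegral_indicator hS, ← lintegral_indicator hS]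
  have : ∀ x, S.indicator (fun y => f (2*c - y)) x = S.indicator f (2*c - x) := by
    intro x
    by_cases hx : x ∈ S
    · rw [indicator_of_mem hx, indicator_of_mem ((hSsym x).mpr hx)]
    · rw [indicator_of_notMem hx, indicator_of_notMem (fun h => hx ((hSsym x).mp h))]
  simp_rw [this]
  exact reflect_lintegral c _ (hf.indicator hS)

lemma two_mul_gaussian {c : ℝ} (θ : ℝ) {S : Set ℝ} (hS : MeasurableSet S)
    (hSsym : ∀ x, 2*c - x ∈ S ↔ x ∈ S) :
    2 * gaussianReal θ 1 S = ∫⁻ x in S, ENNReal.ofReal (Msym θ c x) := by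
  rw [gaussianReal_apply θ one_ne_zero S]
  have h1 : ∀ x : ℝ, ENNReal.ofReal (Msym θ c x)
      = ENNReal.ofReal (gaussianPDFReal θ 1 x)
        + ENNReal.ofReal (gaussianPDFReal θ 1 (2*c - x)) := fun x =>
    ENNReal.ofReal_add (gaussianPDFReal_nonneg _ _ _) (gaussianPDFReal_nonneg _ _ _)
  simp_rw [h1]
  rw [lintegral_add_left ((measurable_gaussianPDFReal θ 1).ennreal_ofReal)]
  rw [symm_setLIntegral hS hSsym _ ((measurable_gaussianPDFReal θ 1).ennreal_ofReal)]
  simp_rw [gaussianPDF_def]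
  ring

lemma lintegral_prod_mono {f g : ℝ → ℝ≥0∞} (hf : Measurable f) (hg : Measurable g)
    {A B : Set ℝ} (h : ∀ x ∈ A, ∀ y ∈ B, f x * g y ≤ g x * f y) :
    (∫⁻ x in A, f x) * ∫⁻ y in B, g y ≤ (∫⁻ x in A, g x) * ∫⁻ y in B, f y := by
  calc (∫⁻ x in A, f x) * ∫⁻ y in B, g y = ∫⁻ x in A, f x * ∫⁻ y in B, g y :=
        (lintegral_mul_const _ hf).symm
    _ ≤ ∫⁻ x in A, g x * ∫⁻ y in B, f y := by
        refine setLIntegral_mono (hg.mul_const _) (fun x hx => ?_)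
        calc f x * ∫⁻ y in B, g y = ∫⁻ y in B, f x * g y := (lintegral_const_mul _ hg).symm
          _ ≤ ∫⁻ y in B, g x * f y :=
              setLIntegral_mono (hf.const_mul _) (fun y hy => h x hx y hy)
          _ = g x * ∫⁻ y in B, f y := lintegral_const_mul _ hf
    _ = (∫⁻ x in A, g x) * ∫⁻ y in B, f y := lintegral_mul_const _ hg

lemma gaussian_pos {θ : ℝ} {S : Set ℝ} (h : 0 < volume S) : 0 < gaussianReal θ 1 S := by
  rcases eq_or_lt_of_le (zero_le : 0 ≤ gaussianReal θ 1 S) with h0 | h0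
  · exact absurd (gaussianReal_absolutelyContinuous' θ one_ne_zero h0.symm) h.ne'
  · exact h0

lemma gaussian_null {θ : ℝ} {S : Set ℝ} (h : volume S = 0) : gaussianReal θ 1 S = 0 :=
  gaussianReal_absolutelyContinuous θ one_ne_zero h


lemma gaussian_prod_le {c θ₀ θ : ℝ} {A B : Set ℝ}
    (hA : MeasurableSet A) (hB : MeasurableSet B)
    (hAsym : ∀ x, 2*c - x ∈ A ↔ x ∈ A) (hBsym : ∀ x, 2*c - x ∈ B ↔ x ∈ B)
    (h : ∀ x ∈ A, ∀ y ∈ B, Msym θ₀ c x * Msym θ c y ≤ Msym θ c x * Msym θ₀ c y) :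
    gaussianReal θ₀ 1 A * gaussianReal θ 1 B ≤ gaussianReal θ 1 A * gaussianReal θ₀ 1 B := by
  have h4 : (2 * gaussianReal θ₀ 1 A) * (2 * gaussianReal θ 1 B)
      ≤ (2 * gaussianReal θ 1 A) * (2 * gaussianReal θ₀ 1 B) := by
    rw [two_mul_gaussian θ₀ hA hAsym, two_mul_gaussian θ hB hBsym,
        two_mul_gaussian θ hA hAsym, two_mul_gaussian θ₀ hB hBsym]
    refine lintegral_prod_mono ((measurable_Msym θ₀ c).ennreal_ofReal)
      ((measurable_Msym θ c).ennreal_ofReal) (fun x hx y hy => ?_)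
    rw [← ENNReal.ofReal_mul (Msym_nonneg _ _ _), ← ENNReal.ofReal_mul (Msym_nonneg _ _ _)]
    exact ENNReal.ofReal_le_ofReal (h x hx y hy)
  have e : ∀ a b : ℝ≥0∞, (2*a) * (2*b) = 4 * (a*b) := fun a b => by ring
  rw [e, e] at h4
  exact (ENNReal.mul_le_mul_iff_right (by norm_num) (by norm_num)).mp h4

lemma ratio_le_iff {θ₀ θ : ℝ} {C S : Set ℝ}
    (hC0 : gaussianReal θ₀ 1 C ≠ 0) (hC : gaussianReal θ 1 C ≠ 0) :
    ((gaussianReal θ₀ 1) S).toReal / ((gaussianReal θ₀ 1) C).toReal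
      ≤ ((gaussianReal θ 1) S).toReal / ((gaussianReal θ 1) C).toReal
    ↔ gaussianReal θ₀ 1 S * gaussianReal θ 1 C ≤ gaussianReal θ 1 S * gaussianReal θ₀ 1 C := by
  rw [div_le_div_iff₀ (ENNReal.toReal_pos hC0 (measure_ne_top _ _))
      (ENNReal.toReal_pos hC (measure_ne_top _ _)),
    ← ENNReal.toReal_mul, ← ENNReal.toReal_mul]
  exact ENNReal.toReal_le_toReal (ENNReal.mul_ne_top (measure_ne_top _ _) (measure_ne_top _ _))
    (ENNReal.mul_ne_top (measure_ne_top _ _) (measure_ne_top _ _))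

set_option maxHeartbeats 1000000 in
lemma backward_ineq {c t θ₀ θ : ℝ} (hd : |θ₀ - c| ≤ |θ - c|)
    {C : Set ℝ} (hCm : MeasurableSet C) (hCsym : ∀ x, (2*c - x) ∈ C ↔ x ∈ C) :
    gaussianReal θ₀ 1 (C ∩ {x | t ≤ |x - c|}) * gaussianReal θ 1 C
      ≤ gaussianReal θ 1 (C ∩ {x | t ≤ |x - c|}) * gaussianReal θ₀ 1 C := by
  set E : Set ℝ := {x | t ≤ |x - c|} with hE
  have hEm : MeasurableSet E :=
    measurableSet_le measurable_const ((measurable_id.sub_const c).abs)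
  have hEsym : ∀ x, (2*c - x) ∈ E ↔ x ∈ E := by
    intro x
    simp only [hE, mem_setOf_eq, show 2*c - x - c = -(x - c) by ring, abs_neg]
  have hsplit : ∀ θ' : ℝ, gaussianReal θ' 1 C
      = gaussianReal θ' 1 (C ∩ E) + gaussianReal θ' 1 (C \ E) := fun θ' =>
    (measure_inter_add_diff C hEm).symm
  rw [hsplit θ₀, hsplit θ, mul_add, mul_add, mul_comm (gaussianReal θ₀ 1 (C ∩ E))
      (gaussianReal θ 1 (C ∩ E))]
  refine add_le_add le_rfl ?_
  refine gaussian_prod_le (hCm.inter hEm) (hCm.diff hEm)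
    (fun x => by rw [mem_inter_iff, mem_inter_iff, hCsym, hEsym])
    (fun x => by rw [mem_diff, mem_diff, hCsym, hEsym])
    (fun x hx y hy => Msym_mul_le hd ?_)
  have h1 : t ≤ |x - c| := hx.2
  have h2 : ¬ t ≤ |y - c| := hy.2
  linarith [lt_of_not_ge h2]



lemma vol_preimage_sub_right (c : ℝ) {T : Set ℝ} (hT : MeasurableSet T) :
    volume ((fun x : ℝ => x - c) ⁻¹' T) = volume T :=
  (measurePreserving_sub_right volume c).measure_preimage hT.nullMeasurableSet

lemma vol_preimage_sub_left (c : ℝ) {T : Set ℝ} (hT : MeasurableSet T) :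
    volume ((fun x : ℝ => c - x) ⁻¹' T) = volume T :=
  (MeasureTheory.Measure.measurePreserving_sub_left volume c).measure_preimage
    hT.nullMeasurableSet

lemma radial_subset (c : ℝ) (T : Set ℝ) :
    {x : ℝ | |x - c| ∈ T} ⊆ ((fun x : ℝ => x - c) ⁻¹' T) ∪ ((fun x : ℝ => c - x) ⁻¹' T) := by
  intro x hx
  rcases abs_cases (x - c) with ⟨h, _⟩ | ⟨h, _⟩
  · left; rwa [mem_preimage, ← h]
  · right; rw [mem_preimage, show c - x = -(x - c) by ring, ← h]; exact hx

lemma radial_null {c : ℝ} {T : Set ℝ} (hT : MeasurableSet T) (h : volume T = 0) :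
    volume {x : ℝ | |x - c| ∈ T} = 0 := by
  refine measure_mono_null (radial_subset c T) (measure_union_null ?_ ?_)
  · rw [vol_preimage_sub_right c hT]; exact h
  · rw [vol_preimage_sub_left c hT]; exact h

lemma radial_pos {c : ℝ} {T : Set ℝ} (hT : MeasurableSet T) (hT0 : T ⊆ Ici 0)
    (h : 0 < volume T) : 0 < volume {x : ℝ | |x - c| ∈ T} := by
  have hsub : (fun x : ℝ => x - c) ⁻¹' T ⊆ {x : ℝ | |x - c| ∈ T} := by
    intro x hx
    have h0 : (0:ℝ) ≤ x - c := hT0 hx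
    simpa [mem_setOf_eq, abs_of_nonneg h0] using hx
  calc 0 < volume T := h
    _ = volume ((fun x : ℝ => x - c) ⁻¹' T) := (vol_preimage_sub_right c hT).symm
    _ ≤ _ := measure_mono hsub

lemma pdf_eq (θ x : ℝ) :
    gaussianPDFReal θ 1 x = (Real.sqrt (2*π))⁻¹ * Real.exp (-(x-θ)^2/2) := by
  unfold gaussianPDFReal
  norm_num

lemma gauss_upper {θ K : ℝ} {S : Set ℝ} (hb : ∀ x ∈ S, gaussianPDFReal θ 1 x ≤ K) :
    gaussianReal θ 1 S ≤ ENNReal.ofReal K * volume S := by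
  rw [gaussianReal_apply _ one_ne_zero, ← setLIntegral_const S (ENNReal.ofReal K)]
  refine setLIntegral_mono measurable_const (fun x hx => ?_)
  rw [gaussianPDF_def]
  exact ENNReal.ofReal_le_ofReal (hb x hx)

lemma gauss_lower {θ K : ℝ} {S : Set ℝ} (hS : MeasurableSet S)
    (hb : ∀ x ∈ S, K ≤ gaussianPDFReal θ 1 x) :
    ENNReal.ofReal K * volume S ≤ gaussianReal θ 1 S := by
  rw [gaussianReal_apply _ one_ne_zero, ← setLIntegral_const S (ENNReal.ofReal K)]
  refine setLIntegral_mono ((measurable_gaussianPDFReal θ 1).ennreal_ofReal) (fun x hx => ?_)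
  rw [gaussianPDF_def]
  exact ENNReal.ofReal_le_ofReal (hb x hx)


lemma tail_structure {T : Set ℝ} (hT0 : T ⊆ Ici 0)
    (hA : ∀ q : ℝ, 0 < volume (T ∩ Iio q) → volume (Ici q \ T) = 0) :
    volume T = 0 ∨ ∃ t : ℝ, 0 ≤ t ∧ volume (T ∆ (Ici t)) = 0 := by
  by_cases hP : ∀ q : ℝ, volume (T ∩ Iio q) = 0
  · left
    have cover : T ⊆ ⋃ n : ℕ, T ∩ Iio (n : ℝ) := by
      intro r hr
      obtain ⟨n, hn⟩ := exists_nat_gt r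
      exact mem_iUnion.mpr ⟨n, hr, hn⟩
    exact measure_mono_null cover (measure_iUnion_null fun n => hP n)
  · right
    push_neg at hP
    obtain ⟨q₀, hq₀⟩ := hP
    set S := {q : ℝ | 0 < volume (T ∩ Iio q)} with hSdef
    have hq₀S : q₀ ∈ S := pos_iff_ne_zero.mpr hq₀
    have hSpos : ∀ q ∈ S, 0 < q := by
      intro q hq
      by_contra hq'
      push_neg at hq'
      have : T ∩ Iio q = ∅ := by
        ext r
        simp only [mem_inter_iff, mem_Iio, mem_empty_iff_false, iff_false, not_and, not_lt]
        intro hr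
        exact le_trans hq' (hT0 hr)
      rw [hSdef] at hq
      simp only [mem_setOf_eq, this, measure_empty] at hq
      exact lt_irrefl _ hq
    have hSbd : BddBelow S := ⟨0, fun q hq => (hSpos q hq).le⟩
    set t := sInf S with htdef
    have ht0 : 0 ≤ t := le_csInf ⟨q₀, hq₀S⟩ (fun q hq => (hSpos q hq).le)
    refine ⟨t, ht0, ?_⟩
    have h1 : volume (T ∩ Iio t) = 0 := by
      have cover : T ∩ Iio t ⊆ ⋃ n : ℕ, T ∩ Iio (t - 1/((n:ℝ)+1)) := by
        rintro r ⟨hrT, hrt⟩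
        obtain ⟨n, hn⟩ := exists_nat_one_div_lt (K := ℝ) (sub_pos.mpr hrt)
        refine mem_iUnion.mpr ⟨n, hrT, ?_⟩
        simp only [mem_Iio]
        linarith
      refine measure_mono_null cover (measure_iUnion_null fun n => ?_)
      by_contra h
      have hmem : t - 1/((n:ℝ)+1) ∈ S := pos_iff_ne_zero.mpr h
      have := csInf_le hSbd hmem
      have hpos : 0 < 1/((n:ℝ)+1) := by positivity
      rw [← htdef] at this
      linarith
    have h2 : volume (Ioi t \ T) = 0 := by
      have cover : Ioi t \ T ⊆ ⋃ n : ℕ, Ici (t + 1/((n:ℝ)+1)) \ T := by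
        rintro r ⟨hrt, hrT⟩
        obtain ⟨n, hn⟩ := exists_nat_one_div_lt (K := ℝ) (sub_pos.mpr hrt)
        refine mem_iUnion.mpr ⟨n, ?_, hrT⟩
        simp only [mem_Ici]
        linarith
      refine measure_mono_null cover (measure_iUnion_null fun n => ?_)
      have hlt : t < t + 1/((n:ℝ)+1) := by
        have : 0 < 1/((n:ℝ)+1) := by positivity
        linarith
      obtain ⟨s, hsS, hs⟩ := exists_lt_of_csInf_lt ⟨q₀, hq₀S⟩ hlt
      have hmono : 0 < volume (T ∩ Iio (t + 1/((n:ℝ)+1))) :=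
        lt_of_lt_of_le hsS (measure_mono (inter_subset_inter_right _ (Iio_subset_Iio hs.le)))
      exact hA _ hmono
    have hsub : T ∆ (Ici t) ⊆ (T ∩ Iio t) ∪ ({t} ∪ (Ioi t \ T)) := by
      intro x hx
      rcases Set.mem_symmDiff.mp hx with ⟨hxT, hxI⟩ | ⟨hxI, hxT⟩
      · left; exact ⟨hxT, (lt_of_not_ge (fun h => hxI h) : x < t)⟩
      · right
        rcases eq_or_lt_of_le (mem_Ici.mp hxI) with h | h
        · left; exact h.symm
        · right; exact ⟨h, hxT⟩
    refine measure_mono_null hsub (measure_union_null h1 (measure_union_null ?_ h2))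
    exact measure_singleton t


set_option maxHeartbeats 1000000 in
lemma no_gap {c lam : ℝ} (hlam : 0 ≤ lam) {T : Set ℝ} (hTm : MeasurableSet T)
    (hT0 : T ⊆ Ici 0)
    (H : ∀ θ ∈ Iio (c - lam) ∪ Ioi (c + lam),
        ∀ C : Set ℝ, MeasurableSet C → (∀ x, (2 * c - x) ∈ C ↔ x ∈ C) → 0 < volume C →
          ((gaussianReal c 1) (C ∩ {x | |x - c| ∈ T})).toReal
              / ((gaussianReal c 1) C).toReal
            ≤ ((gaussianReal θ 1) (C ∩ {x | |x - c| ∈ T})).toReal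
              / ((gaussianReal θ 1) C).toReal)
    (q : ℝ) (hPq : 0 < volume (T ∩ Iio q)) : volume (Ici q \ T) = 0 := by
  -- q is positive
  have hq0 : 0 < q := by
    by_contra h
    push_neg at h
    have hempty : T ∩ Iio q = ∅ := by
      ext r
      simp only [mem_inter_iff, mem_Iio, mem_empty_iff_false, iff_false, not_and, not_lt]
      intro hr
      exact h.trans (hT0 hr)
    rw [hempty] at hPq
    simp at hPq
  by_contra hN
  -- find a positive chunk of the gap, away from q
  have hn : ∃ n : ℕ, 0 < volume ((Ici q \ T) ∩ Icc (q + 1/((n:ℝ)+1)) (q + (n:ℝ) + 1)) := by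
    by_contra h
    push_neg at h
    have hall : ∀ n : ℕ, volume ((Ici q \ T) ∩ Icc (q + 1/((n:ℝ)+1)) (q + (n:ℝ) + 1)) = 0 :=
      fun n => le_antisymm (h n) zero_le
    have cover : Ici q \ T ⊆ {q} ∪ ⋃ n : ℕ,
        ((Ici q \ T) ∩ Icc (q + 1/((n:ℝ)+1)) (q + (n:ℝ) + 1)) := by
      rintro r ⟨hrq, hrT⟩
      rcases eq_or_lt_of_le (mem_Ici.mp hrq) with h' | h'
      · left; exact h'.symm
      · right
        obtain ⟨n, hn1⟩ := exists_nat_gt (max (1/(r - q)) (r - q))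
        have hrq' : 0 < r - q := sub_pos.mpr h'
        have hn2 : 1/(r-q) < n := (le_max_left _ _).trans_lt hn1
        have hn3 : r - q < n := (le_max_right _ _).trans_lt hn1
        have hnpos : 0 < (n:ℝ) := lt_trans (by positivity) hn2
        refine mem_iUnion.mpr ⟨n, ⟨⟨hrq, hrT⟩, ?_, ?_⟩⟩
        · have h4 : 1/((n:ℝ)+1) < 1/(n:ℝ) := by
            apply one_div_lt_one_div_of_lt hnpos
            linarith
          have h5 : 1/(n:ℝ) < r - q := by
            rw [div_lt_iff₀ hnpos]
            rw [div_lt_iff₀ hrq'] at hn2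
            nlinarith
          linarith
        · linarith
    exact hN (measure_mono_null cover
      (measure_union_null (measure_singleton q) (measure_iUnion_null hall)))
  obtain ⟨n, hB⟩ := hn
  set q' : ℝ := q + 1/((n:ℝ)+1) with hq'def
  set M : ℝ := q + (n:ℝ) + 1 with hMdef
  have hqq' : q < q' := by
    have : 0 < 1/((n:ℝ)+1) := by positivity
    simp only [hq'def]; linarith
  have hq'M : q' ≤ M := by
    have h1 : 1/((n:ℝ)+1) ≤ 1 := by
      rw [div_le_one (by positivity)]; linarith [Nat.cast_nonneg (α := ℝ) n]
    simp only [hq'def, hMdef]; linarith [Nat.cast_nonneg (α := ℝ) n]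
  clear_value q' M
  set A : Set ℝ := T ∩ Iio q with hAdef
  set B : Set ℝ := (Ici q \ T) ∩ Icc q' M with hBdef
  have hAm : MeasurableSet A := hTm.inter measurableSet_Iio
  have hBm : MeasurableSet B := (measurableSet_Ici.diff hTm).inter measurableSet_Icc
  have hA_sub : A ⊆ Ico 0 q := fun r hr => ⟨hT0 hr.1, hr.2⟩
  have hB_sub : B ⊆ Icc q' M := inter_subset_right
  -- radial sets
  set CA : Set ℝ := {x | |x - c| ∈ A} with hCAdef
  set CB : Set ℝ := {x | |x - c| ∈ B} with hCBdef
  set CC : Set ℝ := {x | |x - c| ∈ A ∪ B} with hCCdef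
  have habs : Measurable (fun x : ℝ => |x - c|) := (measurable_id.sub_const c).abs
  have hCAm : MeasurableSet CA := hAm.preimage habs
  have hCBm : MeasurableSet CB := hBm.preimage habs
  have hCCm : MeasurableSet CC := (hAm.union hBm).preimage habs
  have hCC_eq : CC = CA ∪ CB := by
    ext x; simp only [hCCdef, hCAdef, hCBdef, mem_setOf_eq, mem_union]
  have hdisj : Disjoint CA CB := by
    rw [disjoint_left]
    intro x hx hx'
    have h1 : |x - c| < q := (hA_sub hx).2
    have h2 : q' ≤ |x - c| := (hB_sub hx').1
    linarith
  have hCCsym : ∀ x, (2*c - x) ∈ CC ↔ x ∈ CC := by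
    intro x
    simp only [hCCdef, mem_setOf_eq, show 2*c - x - c = -(x - c) by ring, abs_neg]
  have hABsub : A ∪ B ⊆ Ici 0 := by
    rintro r (hr | hr)
    · exact (hA_sub hr).1
    · exact mem_Ici.mpr (le_trans (by linarith) ((hB_sub hr).1))
  have hCCvol : 0 < volume CC :=
    radial_pos (hAm.union hBm) hABsub (lt_of_lt_of_le hPq (measure_mono subset_union_left))
  have hCAvolpos : 0 < volume CA := radial_pos hAm (fun r hr => (hA_sub hr).1) hPq
  have hCCD : CC ∩ {x | |x - c| ∈ T} = CA := by
    ext x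
    simp only [hCCdef, hCAdef, mem_inter_iff, mem_setOf_eq, mem_union]
    constructor
    · rintro ⟨hab | hab, hT⟩
      · exact hab
      · exact absurd hT hab.1.2
    · intro hx
      exact ⟨Or.inl hx, hx.1⟩
  -- constants
  set αr : ℝ := (gaussianReal c 1 CA).toReal with hαdef
  have hαr : 0 < αr :=
    ENNReal.toReal_pos (gaussian_pos hCAvolpos).ne' (measure_ne_top _ _)
  have hvB_ne_top : volume B ≠ ⊤ :=
    ((measure_mono hB_sub).trans_lt measure_Icc_lt_top).ne
  set vr : ℝ := (volume B).toReal with hvrdef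
  have hvr : 0 < vr := ENNReal.toReal_pos hB.ne' hvB_ne_top
  set K : ℝ := (Real.sqrt (2*π))⁻¹ with hKdef
  have hK : 0 < K := by
    rw [hKdef]
    exact inv_pos.mpr (Real.sqrt_pos.mpr (by positivity))
  clear_value αr vr K
  set R : ℝ := Real.log (2*q/(αr*vr)) with hRdef
  set lambda : ℝ := 1 + max (max lam M) ((2*R/(q'-q) + q + q')/2) with hlamdef
  clear_value R lambda
  have hl1 : lam < lambda := by
    have := le_max_left lam M
    have := le_max_left (max lam M) ((2*R/(q'-q) + q + q')/2)
    simp only [hlamdef]; linarith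
  have hlM : M ≤ lambda := by
    have := le_max_right lam M
    have := le_max_left (max lam M) ((2*R/(q'-q) + q + q')/2)
    simp only [hlamdef]; linarith
  have hlq' : q' ≤ lambda := le_trans hq'M hlM
  have hlq : q ≤ lambda := le_trans hqq'.le hlq'
  have hRlt : R < (q'-q)*(2*lambda - q - q')/2 := by
    have h1 := le_max_right (max lam M) ((2*R/(q'-q) + q + q')/2)
    have h2 : (2*R/(q'-q) + q + q')/2 < lambda := by simp only [hlamdef]; linarith
    have h3 : 0 < q' - q := by linarith
    have h5 : 2*R/(q'-q) < 2*lambda - q - q' := by linarith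
    have h6 := mul_lt_mul_of_pos_left h5 h3
    have h7 : (q'-q) * (2*R/(q'-q)) = 2*R := by field_simp
    rw [h7] at h6
    linarith
  set θ : ℝ := c + lambda with hθdef
  clear_value θ
  -- apply the hypothesis
  have hratio := H θ (Or.inr (by simp only [mem_Ioi, hθdef]; linarith)) CC hCCm hCCsym hCCvol
  rw [hCCD, ratio_le_iff (gaussian_pos hCCvol).ne' (gaussian_pos hCCvol).ne'] at hratio
  have hsplit : ∀ θ' : ℝ, gaussianReal θ' 1 CC
      = gaussianReal θ' 1 CA + gaussianReal θ' 1 CB := by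
    intro θ'
    rw [hCC_eq]
    exact measure_union hdisj hCBm
  rw [hsplit c, hsplit θ, mul_add, mul_add,
    mul_comm (gaussianReal θ 1 CA) (gaussianReal c 1 CA)] at hratio
  have key := (ENNReal.add_le_add_iff_left
    (ENNReal.mul_ne_top (measure_ne_top _ _) (measure_ne_top _ _))).mp hratio
  -- upper bound on gaussianReal θ 1 CA
  have hub : gaussianReal θ 1 CA
      ≤ ENNReal.ofReal (K * Real.exp (-(lambda-q)^2/2) * (2*q)) := by
    have hstep : gaussianReal θ 1 CA
        ≤ ENNReal.ofReal (K * Real.exp (-(lambda-q)^2/2)) * volume CA := by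
      refine gauss_upper (fun x hx => ?_)
      have hu : |x - c| < q := (hA_sub hx).2
      obtain ⟨hu1, hu2⟩ := abs_lt.mp hu
      rw [pdf_eq, ← hKdef]
      have hexp : Real.exp (-(x - θ)^2/2) ≤ Real.exp (-(lambda - q)^2/2) := by
        refine Real.exp_le_exp.mpr ?_
        simp only [hθdef]
        nlinarith [mul_nonneg (by linarith : (0:ℝ) ≤ q - (x - c))
          (by linarith : (0:ℝ) ≤ 2*lambda - q - (x - c))]
      exact mul_le_mul_of_nonneg_left hexp hK.le
    have hvol : volume CA ≤ ENNReal.ofReal (2*q) := by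
      have hsub2 : CA ⊆ Ioo (c - q) (c + q) := by
        intro x hx
        have hu := abs_lt.mp (hA_sub hx).2
        exact ⟨by linarith [hu.1], by linarith [hu.2]⟩
      calc volume CA ≤ volume (Ioo (c-q) (c+q)) := measure_mono hsub2
        _ = ENNReal.ofReal (2*q) := by rw [Real.volume_Ioo]; ring_nf
    calc gaussianReal θ 1 CA
        ≤ ENNReal.ofReal (K * Real.exp (-(lambda-q)^2/2)) * volume CA := hstep
      _ ≤ ENNReal.ofReal (K * Real.exp (-(lambda-q)^2/2)) * ENNReal.ofReal (2*q) :=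
          mul_le_mul' le_rfl hvol
      _ = ENNReal.ofReal (K * Real.exp (-(lambda-q)^2/2) * (2*q)) :=
          (ENNReal.ofReal_mul (by positivity)).symm
  -- lower bound on gaussianReal θ 1 CB
  have hlb : ENNReal.ofReal (K * Real.exp (-(lambda-q')^2/2)) * volume B
      ≤ gaussianReal θ 1 CB := by
    have hsubB : (fun x : ℝ => x - c) ⁻¹' B ⊆ CB := by
      intro x hx
      have h0 : (0:ℝ) ≤ x - c := le_trans (by linarith) (hB_sub hx).1
      simpa [hCBdef, mem_setOf_eq, abs_of_nonneg h0] using hx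
    calc ENNReal.ofReal (K * Real.exp (-(lambda-q')^2/2)) * volume B
        = ENNReal.ofReal (K * Real.exp (-(lambda-q')^2/2))
            * volume ((fun x : ℝ => x - c) ⁻¹' B) := by rw [vol_preimage_sub_right c hBm]
      _ ≤ gaussianReal θ 1 ((fun x : ℝ => x - c) ⁻¹' B) := by
          refine gauss_lower (hBm.preimage (measurable_id.sub_const c)) (fun x hx => ?_)
          obtain ⟨hr1, hr2⟩ := hB_sub hx
          replace hr1 : q' ≤ x - c := hr1
          replace hr2 : x - c ≤ M := hr2
          rw [pdf_eq, ← hKdef]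
          have hexp : Real.exp (-(lambda - q')^2/2) ≤ Real.exp (-(x - θ)^2/2) := by
            refine Real.exp_le_exp.mpr ?_
            simp only [hθdef]
            nlinarith [mul_nonneg (by linarith : (0:ℝ) ≤ x - c - q')
              (by linarith : (0:ℝ) ≤ 2*lambda - q' - (x - c))]
          exact mul_le_mul_of_nonneg_left hexp hK.le
      _ ≤ gaussianReal θ 1 CB := measure_mono hsubB
  -- pass to real numbers
  have keyr : αr * (gaussianReal θ 1 CB).toReal
      ≤ (gaussianReal θ 1 CA).toReal * (gaussianReal c 1 CB).toReal := by
    have h := ENNReal.toReal_mono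
      (ENNReal.mul_ne_top (measure_ne_top _ _) (measure_ne_top _ _)) key
    rw [ENNReal.toReal_mul, ENNReal.toReal_mul] at h
    rw [hαdef]
    exact h
  have h1r : K * Real.exp (-(lambda-q')^2/2) * vr ≤ (gaussianReal θ 1 CB).toReal := by
    have := ENNReal.toReal_mono (measure_ne_top _ _) hlb
    rwa [ENNReal.toReal_mul, ENNReal.toReal_ofReal (by positivity), ← hvrdef] at this
  have h2r : (gaussianReal θ 1 CA).toReal ≤ K * Real.exp (-(lambda-q)^2/2) * (2*q) := by
    have := ENNReal.toReal_mono ENNReal.ofReal_ne_top hub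
    rwa [ENNReal.toReal_ofReal (by positivity)] at this
  have h3r : (gaussianReal c 1 CB).toReal ≤ 1 := by
    have h := prob_le_one (μ := gaussianReal c 1) (s := CB)
    have := ENNReal.toReal_mono ENNReal.one_ne_top h
    rwa [ENNReal.toReal_one] at this
  have combine : αr * (K * Real.exp (-(lambda-q')^2/2) * vr)
      ≤ K * Real.exp (-(lambda-q)^2/2) * (2*q) := by
    calc αr * (K * Real.exp (-(lambda-q')^2/2) * vr)
        ≤ αr * (gaussianReal θ 1 CB).toReal := mul_le_mul_of_nonneg_left h1r hαr.le
      _ ≤ (gaussianReal θ 1 CA).toReal * (gaussianReal c 1 CB).toReal := keyr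
      _ ≤ (K * Real.exp (-(lambda-q)^2/2) * (2*q)) * 1 :=
          mul_le_mul h2r h3r ENNReal.toReal_nonneg (by positivity)
      _ = K * Real.exp (-(lambda-q)^2/2) * (2*q) := mul_one _
  -- derive the contradiction
  have hD2 : ((lambda-q)^2 - (lambda-q')^2)/2 = (q'-q)*(2*lambda - q - q')/2 := by ring
  have hgtexp : 2*q/(αr*vr) < Real.exp (((lambda-q)^2 - (lambda-q')^2)/2) := by
    rw [show (2*q/(αr*vr)) = Real.exp R from by
      rw [hRdef]; exact (Real.exp_log (by positivity)).symm]
    exact Real.exp_lt_exp.mpr (by rw [hD2]; exact hRlt)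
  have hgt2 : 2*q < αr * vr * Real.exp (((lambda-q)^2 - (lambda-q')^2)/2) := by
    rw [div_lt_iff₀ (by positivity)] at hgtexp
    linarith [mul_comm (αr*vr) (Real.exp (((lambda-q)^2 - (lambda-q')^2)/2))]
  have hEE : Real.exp (((lambda-q)^2 - (lambda-q')^2)/2) * Real.exp (-(lambda-q)^2/2)
      = Real.exp (-(lambda-q')^2/2) := by
    rw [← Real.exp_add]; ring_nf
  have hfinal : K * Real.exp (-(lambda-q)^2/2) * (2*q)
      < αr * (K * Real.exp (-(lambda-q')^2/2) * vr) := by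
    have hEpos : 0 < Real.exp (-(lambda-q)^2/2) := Real.exp_pos _
    have h6 : Real.exp (-(lambda-q)^2/2) * (2*q)
        < αr * vr * Real.exp (-(lambda-q')^2/2) := by
      calc Real.exp (-(lambda-q)^2/2) * (2*q)
          < Real.exp (-(lambda-q)^2/2)
              * (αr * vr * Real.exp (((lambda-q)^2 - (lambda-q')^2)/2)) :=
            (mul_lt_mul_iff_right₀ hEpos).mpr hgt2
        _ = αr * vr * (Real.exp (((lambda-q)^2 - (lambda-q')^2)/2)
              * Real.exp (-(lambda-q)^2/2)) := by ring
        _ = αr * vr * Real.exp (-(lambda-q')^2/2) := by rw [hEE]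
    nlinarith
  linarith

set_option maxHeartbeats 1000000 in
theorem stmt13 (c lam : ℝ) (hlam : 0 ≤ lam)
    (D : Set ℝ) (hD : MeasurableSet D)
    (hDsym : ∀ x, (2 * c - x) ∈ D ↔ x ∈ D) :
    (∀ θ₀ ∈ Icc (c - lam) (c + lam),
      ∀ θ ∈ Iio (c - lam) ∪ Ioi (c + lam),
        ∀ C : Set ℝ, MeasurableSet C → (∀ x, (2 * c - x) ∈ C ↔ x ∈ C) →
          0 < volume C →
          ((gaussianReal θ₀ 1) (C ∩ D)).toReal / ((gaussianReal θ₀ 1) C).toReal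
            ≤ ((gaussianReal θ 1) (C ∩ D)).toReal / ((gaussianReal θ 1) C).toReal)
    ↔ (volume D = 0 ∨
        ∃ t : ℝ, 0 ≤ t ∧ volume (symmDiff D {x | t ≤ |x - c|}) = 0) := by
  set T : Set ℝ := Ici 0 ∩ (fun r : ℝ => c + r) ⁻¹' D with hTdef
  have hTm : MeasurableSet T :=
    measurableSet_Ici.inter (hD.preimage (measurable_const.add measurable_id))
  have hT0 : T ⊆ Ici 0 := inter_subset_left
  have hDT : ∀ x, x ∈ D ↔ |x - c| ∈ T := by
    intro x
    have habs : (0:ℝ) ≤ |x - c| := abs_nonneg _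
    simp only [hTdef, mem_inter_iff, mem_Ici, mem_preimage, habs, true_and]
    rcases le_total c x with hcx | hcx
    · rw [abs_of_nonneg (by linarith), show c + (x - c) = x by ring]
    · rw [abs_of_nonpos (by linarith), show c + -(x - c) = 2*c - x by ring]
      exact ⟨fun h => (hDsym x).mpr h, fun h => (hDsym x).mp h⟩
  have hDeq : D = {x : ℝ | |x - c| ∈ T} := Set.ext (fun x => hDT x)
  constructor
  · intro H
    have Hc : ∀ θ ∈ Iio (c - lam) ∪ Ioi (c + lam),
        ∀ C : Set ℝ, MeasurableSet C → (∀ x, (2 * c - x) ∈ C ↔ x ∈ C) →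
          0 < volume C →
          ((gaussianReal c 1) (C ∩ {x | |x - c| ∈ T})).toReal
              / ((gaussianReal c 1) C).toReal
            ≤ ((gaussianReal θ 1) (C ∩ {x | |x - c| ∈ T})).toReal
              / ((gaussianReal θ 1) C).toReal := by
      intro θ hθ C hCm hCsym hCv
      rw [← hDeq]
      exact H c ⟨by linarith, by linarith⟩ θ hθ C hCm hCsym hCv
    rcases tail_structure hT0 (fun q hq => no_gap hlam hTm hT0 Hc q hq) with h | ⟨t, ht, hnull⟩
    · left
      rw [hDeq]
      exact radial_null hTm h
    · right
      refine ⟨t, ht, ?_⟩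
      have hlift : (symmDiff D {x | t ≤ |x - c|}) ⊆ {x : ℝ | |x - c| ∈ T ∆ (Ici t)} := by
        intro x hx
        rcases Set.mem_symmDiff.mp hx with ⟨h1, h2⟩ | ⟨h1, h2⟩
        · exact Set.mem_symmDiff.mpr (Or.inl ⟨(hDT x).mp h1, fun h => h2 h⟩)
        · exact Set.mem_symmDiff.mpr (Or.inr ⟨h1, fun h => h2 ((hDT x).mpr h)⟩)
      exact measure_mono_null hlift
        (radial_null (hTm.symmDiff measurableSet_Ici) hnull)
  · intro h θ₀ hθ₀ θ hθ C hCm hCsym hCvol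
    rcases h with h | ⟨t, ht, hnull⟩
    · have h0 : ∀ θ' : ℝ, gaussianReal θ' 1 (C ∩ D) = 0 := fun θ' =>
        gaussian_null (measure_mono_null inter_subset_right h)
      rw [h0 θ₀, h0 θ]
      simp
    · have hd : |θ₀ - c| ≤ |θ - c| := by
        have h1 : |θ₀ - c| ≤ lam := abs_le.mpr ⟨by linarith [hθ₀.1], by linarith [hθ₀.2]⟩
        have h2 : lam ≤ |θ - c| := by
          rcases hθ with h' | h'
          · simp only [mem_Iio] at h'
            exact le_abs.mpr (Or.inr (by linarith))
          · simp only [mem_Ioi] at h'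
            exact le_abs.mpr (Or.inl (by linarith))
        exact h1.trans h2
      have hgDE : ∀ θ' : ℝ, gaussianReal θ' 1 (C ∩ D)
          = gaussianReal θ' 1 (C ∩ {x | t ≤ |x - c|}) := by
        intro θ'
        have hsub : (C ∩ D) ∆ (C ∩ {x | t ≤ |x - c|}) ⊆ D ∆ {x | t ≤ |x - c|} := by
          intro x hx
          rcases Set.mem_symmDiff.mp hx with ⟨⟨hxC, hxD⟩, hn⟩ | ⟨⟨hxC, hxE⟩, hn⟩
          · exact Set.mem_symmDiff.mpr (Or.inl ⟨hxD, fun hE => hn ⟨hxC, hE⟩⟩)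
          · exact Set.mem_symmDiff.mpr (Or.inr ⟨hxE, fun hDx => hn ⟨hxC, hDx⟩⟩)
        exact measure_congr (measure_symmDiff_eq_zero_iff.mp
          (gaussian_null (measure_mono_null hsub hnull)))
      rw [hgDE θ₀, hgDE θ]
      exact (ratio_le_iff (gaussian_pos hCvol).ne' (gaussian_pos hCvol).ne').mpr
        (backward_ineq hd hCm hCsym)
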